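/- Let m, k ≥ 1, L ∈ ℕ, and let g : ℝ^{m×k} → ℝ be of class C^{L+1}. Let Z^{(1)},…,Z^{(L)} be independent random real m × k matrices whose entries are almost surely bounded and satisfy, for each r, E[(Z^{(r)}_{ij})^2] = 1 for all (i,j) and E[Z^{(r)}_{ij} Z^{(r)}_{rs}] = 0 whenever (i,j) ≠ (r,s). Fix Y ∈ ℝ^{m×k} and (i,j), and define the random variable Q̂_{ij} = Σ_{ℓ=0}^{L} ((−1)^ℓ/ℓ!) (Z^{(1)}_{ij} ⋯ Z^{(ℓ)}_{ij}) · D^ℓ g(Y)[Z^{(1)},…,Z^{(ℓ)}], where D^ℓ g(Y)[δ_1,…,δ_ℓ] denotes the ℓ-th directional (Fréchet) derivative of g at Y in the directions δ_1,…,δ_ℓ (a symmetric ℓ-multilinear map), the ℓ = 0 term being g(Y). Then E[Q̂_{ij}] − g(Y − E_{ij}) = ((−1)^L/L!) ∫_0^1 (1−α)^L (∂^{L+1} g/∂Y_{ij}^{L+1})(Y − α E_{ij}) dα, where ∂^{L+1} g/∂Y_{ij}^{L+1} is the (L+1)-th derivative of t ↦ g(Y + t E_{ij}). In particular, Q̂_{ij}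 is an estimator of g(Y − E_{ij}) whose bias equals this integral remainder. -/

import Mathlib

open MeasureTheory

/-- entrywise "test" function used after expanding the multilinear map in the canonical basis -/
def stmt9Phi {m k : ℕ} (i : Fin m) (j : Fin k) {l L : ℕ} (q : Fin l → Fin m × Fin k)
    (s : Fin L) (v : Fin m → Fin k → ℝ) : ℝ :=
  if h : (s : ℕ) < l then v i j * v (q ⟨s, h⟩).1 (q ⟨s, h⟩).2 else 1

lemma stmt9_expand {m k : ℕ} (v : Fin m → Fin k → ℝ) :
    v = ∑ p : Fin m × Fin k, v p.1 p.2 • (Pi.single p.1 (Pi.single p.2 1) : Fin m → Fin k → ℝ) := by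
  funext a b
  rw [Fintype.sum_prod_type]
  simp [Finset.sum_apply, Pi.single_apply, apply_ite (fun u : Fin k → ℝ => u b)]

lemma stmt9_prod_ext {L l : ℕ} (hl : l ≤ L) (ξ : ℕ → ℝ) (hξ : ∀ n, l ≤ n → ξ n = 1) :
    ∏ s : Fin L, ξ ↑s = ∏ r : Fin l, ξ ↑r := by
  rw [Fin.prod_univ_eq_prod_range, Fin.prod_univ_eq_prod_range]
  exact (Finset.prod_subset (Finset.range_subset_range.2 hl)
    (fun x _ hx => hξ x (by simpa using hx))).symm

lemma stmt9_pointwise {m k L l : ℕ} (hl : l ≤ L) (i : Fin m) (j : Fin k)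
    (f : ContinuousMultilinearMap ℝ (fun _ : Fin l => (Fin m → Fin k → ℝ)) ℝ)
    (Z : Fin L → Fin m → Fin k → ℝ) :
    (∏ r : Fin l, (if h : (r : ℕ) < L then Z ⟨(r : ℕ), h⟩ else 0) i j) *
      f (fun r : Fin l => if h : (r : ℕ) < L then Z ⟨(r : ℕ), h⟩ else 0)
    = ∑ q : Fin l → Fin m × Fin k,
        f (fun r => (Pi.single (q r).1 (Pi.single (q r).2 1) : Fin m → Fin k → ℝ)) *
          ∏ s : Fin L, stmt9Phi i j q s (Z s) := by
  have hd : ∀ r : Fin l, (if h : (r : ℕ) < L then Z ⟨(r : ℕ), h⟩ else 0)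
      = Z ⟨(r : ℕ), lt_of_lt_of_le r.2 hl⟩ := fun r => dif_pos _
  simp only [hd]
  have hsum : f (fun r : Fin l => Z ⟨(r : ℕ), lt_of_lt_of_le r.2 hl⟩)
      = ∑ q : Fin l → Fin m × Fin k,
          (∏ r : Fin l, Z ⟨(r : ℕ), lt_of_lt_of_le r.2 hl⟩ (q r).1 (q r).2) •
            f (fun r => (Pi.single (q r).1 (Pi.single (q r).2 1) : Fin m → Fin k → ℝ)) := by
    calc f (fun r : Fin l => Z ⟨(r : ℕ), lt_of_lt_of_le r.2 hl⟩)
        = f (fun r : Fin l => ∑ p : Fin m × Fin k,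
            Z ⟨(r : ℕ), lt_of_lt_of_le r.2 hl⟩ p.1 p.2 • (Pi.single p.1 (Pi.single p.2 1) : Fin m → Fin k → ℝ)) := by
          exact congrArg f (funext fun r => stmt9_expand _)
      _ = ∑ q : Fin l → Fin m × Fin k, f (fun r =>
            Z ⟨(r : ℕ), lt_of_lt_of_le r.2 hl⟩ (q r).1 (q r).2 •
              (Pi.single (q r).1 (Pi.single (q r).2 1) : Fin m → Fin k → ℝ)) := by
          exact f.toMultilinearMap.map_sum _
      _ = _ := by
          refine Finset.sum_congr rfl fun q _ => ?_
          exact f.toMultilinearMap.map_smul_univ _ _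
  rw [hsum, Finset.mul_sum]
  refine Finset.sum_congr rfl fun q _ => ?_
  rw [smul_eq_mul, ← mul_assoc, ← Finset.prod_mul_distrib, mul_comm]
  congr 1
  set ξ : ℕ → ℝ := fun n => if h : n < L then stmt9Phi i j q (⟨n, h⟩ : Fin L) (Z ⟨n, h⟩) else 1
    with hξdef
  have hξ1 : ∀ n, l ≤ n → ξ n = 1 := by
    intro n hn
    by_cases h : n < L
    · simp only [hξdef, dif_pos h]; unfold stmt9Phi; rw [dif_neg (by simpa using not_lt.2 hn)]
    · simp only [hξdef, dif_neg h]
  calc ∏ r : Fin l, Z ⟨(r : ℕ), lt_of_lt_of_le r.2 hl⟩ i j *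
          Z ⟨(r : ℕ), lt_of_lt_of_le r.2 hl⟩ (q r).1 (q r).2
      = ∏ r : Fin l, ξ ↑r := by
        refine Finset.prod_congr rfl fun r _ => ?_
        have h1 : (r : ℕ) < L := lt_of_lt_of_le r.2 hl
        simp only [hξdef, dif_pos h1]
        unfold stmt9Phi
        rw [dif_pos (show ((⟨(r : ℕ), h1⟩ : Fin L) : ℕ) < l from r.2)]
    _ = ∏ s : Fin L, ξ ↑s := (stmt9_prod_ext hl ξ hξ1).symm
    _ = ∏ s : Fin L, stmt9Phi i j q s (Z s) := by
        refine Finset.prod_congr rfl fun s _ => ?_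
        simp only [hξdef, dif_pos s.2, Fin.eta]
open MeasureTheory


lemma stmt9_ae_pi {n : ℕ} {V : Type*} [MeasurableSpace V] (μ : Fin n → Measure V)
    [∀ r, SigmaFinite (μ r)] (r : Fin n) {p : V → Prop} (h : ∀ᵐ v ∂(μ r), p v) :
    ∀ᵐ Z ∂(Measure.pi μ), p (Z r) := by
  rw [Filter.eventually_iff, mem_ae_iff] at h ⊢
  have heq : {Z : Fin n → V | p (Z r)}ᶜ = (fun Z : Fin n → V => Z r) ⁻¹' ({v | p v}ᶜ) := rfl
  rw [heq]
  exact Measure.pi_eval_preimage_null μ h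

lemma stmt9Phi_measurable {m k l L : ℕ} (i : Fin m) (j : Fin k)
    (q : Fin l → Fin m × Fin k) (s : Fin L) : Measurable (stmt9Phi i j q s) := by
  unfold stmt9Phi
  split
  · fun_prop
  · exact measurable_const

lemma stmt9Phi_bound {m k l L : ℕ} (i : Fin m) (j : Fin k)
    (q : Fin l → Fin m × Fin k) (s : Fin L) {v : Fin m → Fin k → ℝ} {C : ℝ}
    (hv : ∀ a b, |v a b| ≤ C) : |stmt9Phi i j q s v| ≤ max (C * C) 1 := by
  unfold stmt9Phi
  split
  · refine le_trans ?_ (le_max_left _ _)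
    rw [abs_mul]
    exact mul_le_mul (hv i j) (hv _ _) (abs_nonneg _) ((abs_nonneg _).trans (hv i j))
  · simp

lemma stmt9_integrable {m k L l : ℕ} (μ : Fin L → Measure (Fin m → Fin k → ℝ))
    [∀ r, IsProbabilityMeasure (μ r)]
    (hbdd : ∀ r, ∃ C : ℝ, ∀ᵐ Z ∂(μ r), ∀ i j, |Z i j| ≤ C)
    (i : Fin m) (j : Fin k) (q : Fin l → Fin m × Fin k) :
    Integrable (fun Z : Fin L → Fin m → Fin k → ℝ => ∏ s : Fin L, stmt9Phi i j q s (Z s))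
      (Measure.pi μ) := by
  choose C hC using hbdd
  have hae : ∀ᵐ Z ∂(Measure.pi μ), ∀ s : Fin L, ∀ a b, |Z s a b| ≤ C s :=
    (MeasureTheory.ae_all_iff).2 fun s => stmt9_ae_pi μ s (hC s)
  refine ⟨(Finset.measurable_prod _ fun s _ =>
    (stmt9Phi_measurable i j q s).comp (measurable_pi_apply s)).aestronglyMeasurable, ?_⟩
  refine HasFiniteIntegral.of_bounded (C := ∏ s : Fin L, max (C s * C s) 1) ?_
  filter_upwards [hae] with Z hZ
  rw [Real.norm_eq_abs, Finset.abs_prod]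
  exact Finset.prod_le_prod (fun s _ => abs_nonneg _)
    (fun s _ => stmt9Phi_bound i j q s (hZ s))

lemma stmt9Phi_integral {m k l L : ℕ} (ν : Measure (Fin m → Fin k → ℝ))
    [IsProbabilityMeasure ν]
    (hvar : ∀ i j, ∫ Z, (Z i j) ^ 2 ∂ν = 1)
    (hcov : ∀ (i : Fin m) (j : Fin k) (i' : Fin m) (j' : Fin k), (i, j) ≠ (i', j') →
      ∫ Z, Z i j * Z i' j' ∂ν = 0)
    (i : Fin m) (j : Fin k) (q : Fin l → Fin m × Fin k) (s : Fin L) :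
    ∫ v, stmt9Phi i j q s v ∂ν
      = if h : (s : ℕ) < l then (if q ⟨s, h⟩ = (i, j) then 1 else 0) else 1 := by
  unfold stmt9Phi
  split
  · rename_i h
    by_cases hq : q ⟨s, h⟩ = (i, j)
    · rw [if_pos hq, hq]
      rw [show (fun v : Fin m → Fin k → ℝ => v i j * v (i, j).1 (i, j).2)
        = fun v => (v i j) ^ 2 from funext fun v => by ring]
      exact hvar i j
    · rw [if_neg hq]
      refine hcov i j _ _ fun hc => hq ?_
      exact (Prod.ext (congrArg Prod.fst hc.symm) (congrArg Prod.snd hc.symm))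
  · simp

lemma stmt9_pi_fubini {n : ℕ} {V : Type*} [MeasurableSpace V] (μ : Fin n → Measure V)
    [∀ r, IsProbabilityMeasure (μ r)] (φ : Fin n → V → ℝ) :
    ∫ Z : Fin n → V, ∏ s, φ s (Z s) ∂Measure.pi μ = ∏ s, ∫ v, φ s v ∂μ s := by
  letI inst : ∀ _ : Fin n, MeasureSpace V := fun r => { volume := μ r }
  haveI : ∀ r : Fin n, SigmaFinite (@volume V (inst r)) := fun r =>
    @IsFiniteMeasure.toSigmaFinite V _ (μ r) inferInstance
  exact MeasureTheory.integral_fintype_prod_eq_prod (μ := μ) φ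

lemma stmt9_prod_indicator {m k L l : ℕ} (hl : l ≤ L) (i : Fin m) (j : Fin k)
    (q : Fin l → Fin m × Fin k) :
    (∏ s : Fin L, if h : (s : ℕ) < l then (if q ⟨s, h⟩ = (i, j) then (1:ℝ) else 0) else 1)
      = if q = (fun _ => (i, j)) then 1 else 0 := by
  by_cases hq : q = fun _ => (i, j)
  · rw [if_pos hq]
    refine Finset.prod_eq_one fun s _ => ?_
    by_cases h : (s : ℕ) < l
    · rw [dif_pos h, hq, if_pos rfl]
    · rw [dif_neg h]
  · rw [if_neg hq]
    obtain ⟨r, hr⟩ := Function.ne_iff.1 hq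
    refine Finset.prod_eq_zero (Finset.mem_univ (Fin.castLE hl r)) ?_
    have hcast : ((Fin.castLE hl r : Fin L) : ℕ) < l := r.2
    rw [dif_pos hcast]
    rw [if_neg (by simpa [Fin.eta] using hr)]

/-- The key expectation identity for a single Taylor term. -/
lemma stmt9_expectation {m k L l : ℕ} (hl : l ≤ L)
    (μ : Fin L → Measure (Fin m → Fin k → ℝ)) [∀ r, IsProbabilityMeasure (μ r)]
    (hbdd : ∀ r, ∃ C : ℝ, ∀ᵐ Z ∂(μ r), ∀ i j, |Z i j| ≤ C)
    (hvar : ∀ r i j, ∫ Z, (Z i j) ^ 2 ∂(μ r) = 1)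
    (hcov : ∀ r (i : Fin m) (j : Fin k) (i' : Fin m) (j' : Fin k), (i, j) ≠ (i', j') →
      ∫ Z, Z i j * Z i' j' ∂(μ r) = 0)
    (i : Fin m) (j : Fin k)
    (f : ContinuousMultilinearMap ℝ (fun _ : Fin l => (Fin m → Fin k → ℝ)) ℝ) :
    ∫ Z : Fin L → (Fin m → Fin k → ℝ),
        ((∏ r : Fin l, (if h : (r : ℕ) < L then Z ⟨(r : ℕ), h⟩ else 0) i j) *
          f (fun r : Fin l => if h : (r : ℕ) < L then Z ⟨(r : ℕ), h⟩ else 0)) ∂(Measure.pi μ)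
      = f (fun _ => (Pi.single i (Pi.single j 1) : Fin m → Fin k → ℝ)) := by
  simp_rw [stmt9_pointwise hl i j f]
  rw [integral_finset_sum _ fun q _ => (stmt9_integrable μ hbdd i j q).const_mul _]
  have hterm : ∀ q : Fin l → Fin m × Fin k,
      ∫ Z : Fin L → (Fin m → Fin k → ℝ),
          f (fun r => (Pi.single (q r).1 (Pi.single (q r).2 1) : Fin m → Fin k → ℝ)) *
            ∏ s : Fin L, stmt9Phi i j q s (Z s) ∂(Measure.pi μ)
        = f (fun r => (Pi.single (q r).1 (Pi.single (q r).2 1) : Fin m → Fin k → ℝ)) *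
            (if q = (fun _ => (i, j)) then 1 else 0) := by
    intro q
    rw [MeasureTheory.integral_const_mul, stmt9_pi_fubini μ (fun s v => stmt9Phi i j q s v)]
    congr 1
    rw [← stmt9_prod_indicator hl i j q]
    exact Finset.prod_congr rfl fun s _ => stmt9Phi_integral (μ s) (hvar s) (hcov s) i j q s
  simp_rw [hterm]
  rw [Finset.sum_eq_single (fun _ => (i, j))]
  · simp
  · intro q _ hq
    rw [if_neg hq, mul_zero]
  · intro habs
    exact absurd (Finset.mem_univ _) habs

lemma stmt9_term_integrable {m k L l : ℕ} (hl : l ≤ L)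
    (μ : Fin L → Measure (Fin m → Fin k → ℝ)) [∀ r, IsProbabilityMeasure (μ r)]
    (hbdd : ∀ r, ∃ C : ℝ, ∀ᵐ Z ∂(μ r), ∀ i j, |Z i j| ≤ C)
    (i : Fin m) (j : Fin k)
    (f : ContinuousMultilinearMap ℝ (fun _ : Fin l => (Fin m → Fin k → ℝ)) ℝ) :
    Integrable (fun Z : Fin L → (Fin m → Fin k → ℝ) =>
      (∏ r : Fin l, (if h : (r : ℕ) < L then Z ⟨(r : ℕ), h⟩ else 0) i j) *
        f (fun r : Fin l => if h : (r : ℕ) < L then Z ⟨(r : ℕ), h⟩ else 0))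
      (Measure.pi μ) := by
  rw [show (fun Z : Fin L → (Fin m → Fin k → ℝ) =>
      (∏ r : Fin l, (if h : (r : ℕ) < L then Z ⟨(r : ℕ), h⟩ else 0) i j) *
        f (fun r : Fin l => if h : (r : ℕ) < L then Z ⟨(r : ℕ), h⟩ else 0))
    = fun Z => ∑ q : Fin l → Fin m × Fin k,
        f (fun r => (Pi.single (q r).1 (Pi.single (q r).2 1) : Fin m → Fin k → ℝ)) *
          ∏ s : Fin L, stmt9Phi i j q s (Z s) from funext fun Z => stmt9_pointwise hl i j f Z]
  exact integrable_finset_sum _ fun q _ => (stmt9_integrable μ hbdd i j q).const_mul _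


/-- Iterated derivatives of `g` along the line `t ↦ Y + t • E`. -/
lemma stmt9_line_deriv {d : ℕ} {V : Type*} [NormedAddCommGroup V] [NormedSpace ℝ V]
    (g : V → ℝ) (hg : ContDiff ℝ ((d : ℕ∞) + 1) g) (Y E : V) :
    ∀ n : ℕ, n ≤ d + 1 → ∀ t : ℝ,
      iteratedDeriv n (fun t : ℝ => g (Y + t • E)) t
        = iteratedFDeriv ℝ n g (Y + t • E) (fun _ : Fin n => E) := by
  intro n
  induction n with
  | zero => intro _ t; simp [iteratedDeriv_zero, iteratedFDeriv_zero_apply]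
  | succ n ih =>
    intro hn t
    have hn' : n ≤ d + 1 := Nat.le_of_succ_le hn
    have hlt : (n : WithTop ℕ∞) < ((d : ℕ∞) + 1 : ℕ∞) := by
      have : (n : ℕ) < d + 1 := hn
      exact_mod_cast (by exact_mod_cast this : ((n : ℕ∞)) < ((d : ℕ∞) + 1))
    have hdiff : Differentiable ℝ (iteratedFDeriv ℝ n g) :=
      hg.differentiable_iteratedFDeriv hlt
    rw [iteratedDeriv_succ]
    have heq : iteratedDeriv n (fun t : ℝ => g (Y + t • E))
        = fun t : ℝ => iteratedFDeriv ℝ n g (Y + t • E) (fun _ : Fin n => E) :=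
      funext fun t => ih hn' t
    rw [heq]
    have hc : HasDerivAt (fun t : ℝ => Y + t • E) E t := by
      simpa using ((hasDerivAt_id t).smul_const E).const_add Y
    have h1 : HasDerivAt (fun t : ℝ => iteratedFDeriv ℝ n g (Y + t • E))
        (fderiv ℝ (iteratedFDeriv ℝ n g) (Y + t • E) E) t :=
      (hdiff _).hasFDerivAt.comp_hasDerivAt t hc
    have h2 : HasDerivAt
        (fun t : ℝ => iteratedFDeriv ℝ n g (Y + t • E) (fun _ : Fin n => E))
        ((fderiv ℝ (iteratedFDeriv ℝ n g) (Y + t • E) E) (fun _ : Fin n => E)) t :=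
      ((ContinuousMultilinearMap.apply ℝ (fun _ : Fin n => V) ℝ
        (fun _ : Fin n => E)).hasFDerivAt.comp_hasDerivAt t h1)
    rw [h2.deriv, iteratedFDeriv_succ_apply_left]
    rfl

/-- Taylor's theorem with integral remainder, specialized to evaluation at `-1`. -/
lemma stmt9_taylor {d : ℕ} (h : ℝ → ℝ) (hh : ContDiff ℝ ((d : ℕ∞) + 1) h) :
    (∑ l ∈ Finset.range (d + 1), ((-1 : ℝ) ^ l / l.factorial) * iteratedDeriv l h 0) - h (-1)
      = ((-1 : ℝ) ^ d / d.factorial) *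
          ∫ α in (0 : ℝ)..1, (1 - α) ^ d * iteratedDeriv (d + 1) h (-α) := by
  set F : ℝ → ℝ := fun s =>
    ∑ l ∈ Finset.range (d + 1), ((-1 - s) ^ l / l.factorial) * iteratedDeriv l h s with hF
  set F' : ℝ → ℝ := fun s => ((-1 - s) ^ d / d.factorial) * iteratedDeriv (d + 1) h s with hF'
  have hDl : ∀ l : ℕ, l ≤ d → ∀ s : ℝ,
      HasDerivAt (iteratedDeriv l h) (iteratedDeriv (l + 1) h s) s := by
    intro l hl s
    have hlt : (l : WithTop ℕ∞) < ((d : ℕ∞) + 1 : ℕ∞) := by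
      have : ((l : ℕ∞)) < ((d : ℕ∞) + 1) := by exact_mod_cast Nat.lt_succ_of_le hl
      exact_mod_cast this
    have := (hh.differentiable_iteratedDeriv l hlt s).hasDerivAt
    rwa [← iteratedDeriv_succ] at this
  have hterm : ∀ s : ℝ, ∀ l ∈ Finset.range (d + 1),
      HasDerivAt (fun s : ℝ => ((-1 - s) ^ l / l.factorial) * iteratedDeriv l h s)
        ((((l : ℝ) * (-1 - s) ^ (l - 1) * (-1)) / l.factorial) * iteratedDeriv l h s
          + ((-1 - s) ^ l / l.factorial) * iteratedDeriv (l + 1) h s) s := by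
    intro s l hl
    have hu : HasDerivAt (fun s : ℝ => ((-1 - s) ^ l / l.factorial))
        (((l : ℝ) * (-1 - s) ^ (l - 1) * (-1)) / l.factorial) s := by
      have h0 : HasDerivAt (fun s : ℝ => -1 - s) (-1) s := by
        simpa using (hasDerivAt_id s).const_sub (-1 : ℝ)
      exact (h0.pow l).div_const _
    exact hu.mul (hDl l (Nat.lt_succ_iff.mp (Finset.mem_range.mp hl)) s)
  have key : ∀ s : ℝ, HasDerivAt F (F' s) s := by
    intro s
    have H := HasDerivAt.fun_sum (hterm s)
    refine H.congr_deriv ?_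
    rw [Finset.sum_add_distrib]
    have hA : (∑ l ∈ Finset.range (d + 1),
        ((((l : ℝ) * (-1 - s) ^ (l - 1) * (-1)) / l.factorial) * iteratedDeriv l h s))
        = -∑ l ∈ Finset.range d, ((-1 - s) ^ l / l.factorial) * iteratedDeriv (l + 1) h s := by
      rw [Finset.sum_range_succ']
      simp only [Nat.cast_zero, zero_mul, Nat.factorial_zero, Nat.cast_one, zero_div,
        add_zero]
      rw [← Finset.sum_neg_distrib]
      refine Finset.sum_congr rfl fun i _ => ?_
      have hfac : ((i + 1).factorial : ℝ) = (i + 1) * i.factorial := by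
        push_cast [Nat.factorial_succ]; ring
      have hne : (i.factorial : ℝ) ≠ 0 := Nat.cast_ne_zero.2 i.factorial_ne_zero
      have hne1 : ((i : ℝ) + 1) ≠ 0 := by positivity
      simp only [Nat.add_sub_cancel, Nat.cast_add, Nat.cast_one]
      rw [hfac]
      field_simp
    have hB : (∑ l ∈ Finset.range (d + 1),
        ((-1 - s) ^ l / l.factorial) * iteratedDeriv (l + 1) h s)
        = (∑ l ∈ Finset.range d, ((-1 - s) ^ l / l.factorial) * iteratedDeriv (l + 1) h s)
          + F' s := by
      rw [Finset.sum_range_succ]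
    rw [hA, hB]
    ring
  have hcont : Continuous F' := by
    have h1 : Continuous (iteratedDeriv (d + 1) h) := by
      refine hh.continuous_iteratedDeriv (d + 1) ?_
      exact_mod_cast le_of_eq (by push_cast; ring)
    exact (((continuous_const.sub continuous_id).pow d).div_const _).mul h1
  have hFTC : ∫ s in (0 : ℝ)..(-1), F' s = F (-1) - F 0 :=
    intervalIntegral.integral_eq_sub_of_hasDerivAt (fun t _ => key t)
      (hcont.intervalIntegrable _ _)
  have hF0 : F 0 = ∑ l ∈ Finset.range (d + 1),
      ((-1 : ℝ) ^ l / l.factorial) * iteratedDeriv l h 0 := by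
    simp only [hF, sub_zero]
  have hFm1 : F (-1) = h (-1) := by
    show (∑ l ∈ Finset.range (d + 1),
      ((-1 - (-1 : ℝ)) ^ l / l.factorial) * iteratedDeriv l h (-1)) = h (-1)
    rw [Finset.sum_eq_single 0]
    · simp [iteratedDeriv_zero]
    · intro l _ hl
      simp [zero_pow hl, sub_self, show (-1 : ℝ) - -1 = 0 by ring]
    · intro habs; exact absurd (Finset.mem_range.2 (Nat.succ_pos d)) habs
  have hsub : ∫ α in (0 : ℝ)..1, F' (-α) = ∫ s in (-1 : ℝ)..0, F' s := by
    simpa using intervalIntegral.integral_comp_neg (a := (0 : ℝ)) (b := 1) F'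
  calc (∑ l ∈ Finset.range (d + 1), ((-1 : ℝ) ^ l / l.factorial) * iteratedDeriv l h 0) - h (-1)
      = F 0 - F (-1) := by rw [hF0, hFm1]
    _ = -(F (-1) - F 0) := by ring
    _ = -∫ s in (0 : ℝ)..(-1), F' s := by rw [hFTC]
    _ = ∫ s in (-1 : ℝ)..0, F' s := by rw [intervalIntegral.integral_symm]; ring
    _ = ∫ α in (0 : ℝ)..1, F' (-α) := hsub.symm
    _ = ∫ α in (0 : ℝ)..1, ((-1 : ℝ) ^ d / d.factorial) *
          ((1 - α) ^ d * iteratedDeriv (d + 1) h (-α)) := by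
        refine intervalIntegral.integral_congr fun α _ => ?_
        simp only [hF']
        rw [show (-1 : ℝ) - -α = -(1 - α) by ring, neg_pow]
        ring
    _ = ((-1 : ℝ) ^ d / d.factorial) *
          ∫ α in (0 : ℝ)..1, (1 - α) ^ d * iteratedDeriv (d + 1) h (-α) := by
        rw [intervalIntegral.integral_const_mul]

/-- Bias of the randomized Taylor-expansion estimator `Q̂_{ij}` of `g(Y - E_{ij})`:
for `g` of class `C^{L+1}` and independent random matrices `Z⁽¹⁾,…,Z⁽ᴸ⁾` with a.s.
bounded, normalized and uncorrelated entries,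
`E[Q̂_{ij}] - g(Y - E_{ij}) = ((-1)^L/L!) ∫_0^1 (1-α)^L (∂^{L+1}g/∂Y_{ij}^{L+1})(Y - α E_{ij}) dα`. -/
theorem stmt9 (m k L : ℕ) (hm : 1 ≤ m) (hk : 1 ≤ k)
    (g : (Fin m → Fin k → ℝ) → ℝ) (hg : ContDiff ℝ ((L : ℕ∞) + 1) g)
    (μ : Fin L → Measure (Fin m → Fin k → ℝ))
    [∀ r, IsProbabilityMeasure (μ r)]
    (hbdd : ∀ r, ∃ C : ℝ, ∀ᵐ Z ∂(μ r), ∀ i j, |Z i j| ≤ C)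
    (hvar : ∀ r i j, ∫ Z, (Z i j) ^ 2 ∂(μ r) = 1)
    (hcov : ∀ r (i : Fin m) (j : Fin k) (i' : Fin m) (j' : Fin k), (i, j) ≠ (i', j') →
      ∫ Z, Z i j * Z i' j' ∂(μ r) = 0)
    (Y : Fin m → Fin k → ℝ) (i : Fin m) (j : Fin k) :
    (∫ Z : Fin L → (Fin m → Fin k → ℝ),
        (∑ l ∈ Finset.range (L + 1), ((-1 : ℝ) ^ l / l.factorial) *
          ((∏ r : Fin l, (if h : (r : ℕ) < L then Z ⟨(r : ℕ), h⟩ else 0) i j) *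
            iteratedFDeriv ℝ l g Y
              (fun r : Fin l => if h : (r : ℕ) < L then Z ⟨(r : ℕ), h⟩ else 0)))
        ∂(Measure.pi μ))
      - g (Y - Pi.single i (Pi.single j 1))
      = ((-1 : ℝ) ^ L / L.factorial) *
          ∫ α in (0 : ℝ)..1, (1 - α) ^ L *
            iteratedDeriv (L + 1)
              (fun t => g (Y + t • (Pi.single i (Pi.single j 1) : Fin m → Fin k → ℝ)))
              (-α) := by
  set E : Fin m → Fin k → ℝ := Pi.single i (Pi.single j 1) with hE
  set h : ℝ → ℝ := fun t => g (Y + t • E) with hfun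
  have hh : ContDiff ℝ ((L : ℕ∞) + 1) h :=
    hg.comp (contDiff_const.add (contDiff_id.smul contDiff_const))
  have hint : ∫ Z : Fin L → (Fin m → Fin k → ℝ),
      (∑ l ∈ Finset.range (L + 1), ((-1 : ℝ) ^ l / l.factorial) *
        ((∏ r : Fin l, (if h : (r : ℕ) < L then Z ⟨(r : ℕ), h⟩ else 0) i j) *
          iteratedFDeriv ℝ l g Y
            (fun r : Fin l => if h : (r : ℕ) < L then Z ⟨(r : ℕ), h⟩ else 0)))
      ∂(Measure.pi μ)
      = ∑ l ∈ Finset.range (L + 1), ((-1 : ℝ) ^ l / l.factorial) * iteratedDeriv l h 0 := by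
    rw [MeasureTheory.integral_finset_sum _ fun l hl =>
      ((stmt9_term_integrable (Nat.lt_succ_iff.mp (Finset.mem_range.mp hl)) μ hbdd i j
        (iteratedFDeriv ℝ l g Y)).const_mul _)]
    refine Finset.sum_congr rfl fun l hl => ?_
    have hl' : l ≤ L := Nat.lt_succ_iff.mp (Finset.mem_range.mp hl)
    rw [MeasureTheory.integral_const_mul,
      stmt9_expectation hl' μ hbdd hvar hcov i j (iteratedFDeriv ℝ l g Y)]
    congr 1
    have := stmt9_line_deriv g hg Y E l (Nat.le_succ_of_le hl') 0
    rw [this]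
    norm_num
    rfl
  have hgE : g (Y - E) = h (-1) := by
    rw [hfun]
    norm_num [sub_eq_add_neg]
  rw [hint, hgE]
  exact stmt9_taylor h hh
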